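/- Let F be the cumulative distribution function of a probability distribution supported on a finite set {a_1,…,a_m} ⊂ ℝ, let Z_1,…,Z_n be i.i.d. with CDF F, let F̂ be their empirical CDF, and let p_max^m = max_{1≤i≤m} P(Z_1 = a_i). Then for every q ∈ (0,1], the random variable Z_Beta + p_max^m stochastically dominates F(F̂⁻¹(q)): for every t ∈ ℝ, P( F(F̂⁻¹(q)) ≤ t ) ≥ P( Z_Beta + p_max^m ≤ t ), where Z_Beta ∼ Beta(⌈nq⌉, n−⌈nq⌉+1). -/

import Mathlib

open MeasureTheory ProbabilityTheory

/-- The CDF of the `Beta(k, n - k + 1)` distribution (for `1 ≤ k ≤ n`), whose density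
on `[0,1]` is proportional to `x^(k-1)·(1-x)^(n-k)`. -/
noncomputable def betaCDF (k n : ℕ) (t : ℝ) : ℝ :=
  (∫ x in Set.Icc (0 : ℝ) 1 ∩ Set.Iic t, x ^ (k - 1) * (1 - x) ^ (n - k)) /
    ∫ x in Set.Icc (0 : ℝ) 1, x ^ (k - 1) * (1 - x) ^ (n - k)

/-- The empirical quantile `F̂⁻¹(q) = inf{z : F̂(z) ≥ q}`, where `F̂` is the empirical
CDF of the tuple `x`. -/
noncomputable def empQuantile {n : ℕ} (x : Fin n → ℝ) (q : ℝ) : ℝ :=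
  sInf {z : ℝ | q ≤ (Set.ncard {i : Fin n | x i ≤ z} : ℝ) / n}

section Aux
open Finset

noncomputable def binomSum (n k : ℕ) (p : ℝ) : ℝ :=
  ∑ j ∈ Finset.Icc k n, (n.choose j : ℝ) * p ^ j * (1 - p) ^ (n - j)

-- single term derivative
lemma hasDerivAt_term (n j : ℕ) (x : ℝ) :
    HasDerivAt (fun y : ℝ => (n.choose j : ℝ) * y ^ j * (1 - y) ^ (n - j))
      ((n.choose j : ℝ) * ((j : ℝ) * x ^ (j - 1) * (1 - x) ^ (n - j)
        - x ^ j * ((n - j : ℕ) * (1 - x) ^ (n - j - 1)))) x := by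
  have h1 : HasDerivAt (fun y : ℝ => y ^ j) ((j : ℝ) * x ^ (j - 1)) x := hasDerivAt_pow j x
  have h2 : HasDerivAt (fun y : ℝ => (1 - y)) (-1) x := by
    simpa using (hasDerivAt_id x).const_sub 1
  have h3 : HasDerivAt (fun y : ℝ => (1 - y) ^ (n - j))
      (((n - j : ℕ) : ℝ) * (1 - x) ^ (n - j - 1) * (-1)) x :=
    (hasDerivAt_pow (n - j) (1 - x)).comp x h2
  have := (h1.mul h3).const_mul ((n.choose j : ℝ))
  have e : (fun y : ℝ => (n.choose j : ℝ) * y ^ j * (1 - y) ^ (n - j))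
      = fun y => (n.choose j : ℝ) * ((fun y : ℝ => y ^ j) * fun y : ℝ => (1 - y) ^ (n - j)) y := by
    funext y; simp only [Pi.mul_apply]; ring
  rw [e]
  refine this.congr_deriv ?_
  ring

noncomputable def bAux (n : ℕ) (x : ℝ) (j : ℕ) : ℝ :=
  (n : ℝ) * ((n - 1).choose (j - 1) : ℝ) * x ^ (j - 1) * (1 - x) ^ (n - j)

lemma term_telescope (n j : ℕ) (hj1 : 1 ≤ j) (hjn : j ≤ n) (x : ℝ) :
    (n.choose j : ℝ) * ((j : ℝ) * x ^ (j - 1) * (1 - x) ^ (n - j)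
        - x ^ j * ((n - j : ℕ) * (1 - x) ^ (n - j - 1)))
      = bAux n x j - bAux n x (j + 1) := by
  have hn' : n - 1 + 1 = n := by omega
  have hj' : j - 1 + 1 = j := by omega
  have key1 : (n : ℕ) * (n - 1).choose (j - 1) = n.choose j * j := by
    have := Nat.add_one_mul_choose_eq (n - 1) (j - 1)
    simp only [Nat.succ_eq_add_one, hn', hj'] at this
    exact this
  have key2 : n.choose j * (n - j) = n * (n - 1).choose j := by
    have h1 := Nat.choose_succ_right_eq n j
    have h2 := Nat.add_one_mul_choose_eq (n - 1) j
    simp only [Nat.succ_eq_add_one, hn'] at h2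
    omega
  rcases eq_or_lt_of_le hjn with rfl | hlt
  · have hz : (j - 1).choose j = 0 := Nat.choose_eq_zero_of_lt (by omega)
    simp only [bAux, Nat.sub_self, Nat.add_sub_cancel, hz, Nat.choose_self, Nat.cast_one,
      Nat.cast_zero, pow_zero]
    ring
  · have e1 : (j + 1) - 1 = j := by omega
    have e2 : n - (j + 1) = n - j - 1 := by omega
    simp only [bAux, e1, e2]
    have c1 : ((n : ℕ) : ℝ) * ((n - 1).choose (j - 1) : ℝ) = (n.choose j : ℝ) * (j : ℝ) := by
      exact_mod_cast congrArg (Nat.cast (R := ℝ)) key1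
    have c2 : (n.choose j : ℝ) * ((n - j : ℕ) : ℝ) = (n : ℝ) * ((n - 1).choose j : ℝ) := by
      exact_mod_cast congrArg (Nat.cast (R := ℝ)) key2
    calc (n.choose j : ℝ) * ((j : ℝ) * x ^ (j - 1) * (1 - x) ^ (n - j)
        - x ^ j * ((n - j : ℕ) * (1 - x) ^ (n - j - 1)))
        = ((n.choose j : ℝ) * (j:ℝ)) * x ^ (j - 1) * (1 - x) ^ (n - j)
          - ((n.choose j : ℝ) * ((n - j : ℕ):ℝ)) * x ^ j * (1 - x) ^ (n - j - 1) := by ring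
      _ = _ := by rw [c1, c2]

lemma bAux_top (n : ℕ) (x : ℝ) : bAux n x (n + 1) = 0 := by
  rcases Nat.eq_zero_or_pos n with rfl | hn
  · simp [bAux]
  · simp [bAux, Nat.choose_eq_zero_of_lt (by omega : n - 1 < n)]

lemma hasDerivAt_binomSum (n k : ℕ) (hk1 : 1 ≤ k) (hkn : k ≤ n) (x : ℝ) :
    HasDerivAt (fun p => binomSum n k p) (bAux n x k) x := by
  have hsum : HasDerivAt (fun p => binomSum n k p)
      (∑ j ∈ Finset.Icc k n, (bAux n x j - bAux n x (j + 1))) x := by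
    have := HasDerivAt.sum (u := Finset.Icc k n)
      (A := fun j (y : ℝ) => (n.choose j : ℝ) * y ^ j * (1 - y) ^ (n - j))
      (A' := fun j => bAux n x j - bAux n x (j + 1))
      (fun j hj => by
        rw [Finset.mem_Icc] at hj
        have := hasDerivAt_term n j x
        rwa [term_telescope n j (le_trans hk1 hj.1) hj.2 x] at this)
    have e : (fun p => binomSum n k p)
        = ∑ i ∈ Finset.Icc k n, fun y : ℝ => (n.choose i : ℝ) * y ^ i * (1 - y) ^ (n - i) := by
      ext y; simp only [binomSum, Finset.sum_apply]
    rw [e]; exact this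
  have htel : (∑ j ∈ Finset.Icc k n, (bAux n x j - bAux n x (j + 1))) = bAux n x k := by
    have : Finset.Icc k n = Finset.Ico k (n + 1) := rfl
    rw [this, Finset.sum_Ico_eq_sum_range]
    have := Finset.sum_range_sub' (f := fun i => bAux n x (k + i)) (n + 1 - k)
    simp only [← Nat.add_assoc] at this ⊢
    rw [this, Nat.add_sub_cancel' (by omega : k ≤ n + 1), bAux_top, add_zero, sub_zero]
  rwa [htel] at hsum

lemma binomSum_zero (n k : ℕ) (hk : 1 ≤ k) : binomSum n k 0 = 0 := by
  unfold binomSum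
  refine Finset.sum_eq_zero fun j hj => ?_
  rw [Finset.mem_Icc] at hj
  rw [zero_pow (by omega : j ≠ 0)]
  ring

lemma binomSum_one (n k : ℕ) (hkn : k ≤ n) : binomSum n k 1 = 1 := by
  unfold binomSum
  rw [Finset.sum_eq_single n]
  · simp
  · intro j hj hne
    rw [Finset.mem_Icc] at hj
    rw [sub_self, zero_pow (by omega : n - j ≠ 0)]
    ring
  · intro h
    exact absurd (Finset.mem_Icc.mpr ⟨hkn, le_refl n⟩) h

lemma integral_scaled (n k : ℕ) (hk1 : 1 ≤ k) (hkn : k ≤ n) (p : ℝ) :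
    ((n : ℝ) * ((n - 1).choose (k - 1) : ℝ)) * ∫ x in (0:ℝ)..p, x ^ (k - 1) * (1 - x) ^ (n - k)
      = binomSum n k p := by
  have hcont : Continuous fun x : ℝ => bAux n x k := by
    unfold bAux; fun_prop
  have hftc : ∫ x in (0:ℝ)..p, bAux n x k = binomSum n k p - binomSum n k 0 :=
    intervalIntegral.integral_eq_sub_of_hasDerivAt
      (fun x _ => hasDerivAt_binomSum n k hk1 hkn x)
      (hcont.intervalIntegrable 0 p)
  rw [binomSum_zero n k hk1, sub_zero] at hftc
  rw [← hftc, ← intervalIntegral.integral_const_mul]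
  apply intervalIntegral.integral_congr
  intro x _
  unfold bAux
  ring

lemma coeff_pos (n k : ℕ) (hk1 : 1 ≤ k) (hkn : k ≤ n) :
    (0:ℝ) < (n : ℝ) * ((n - 1).choose (k - 1) : ℝ) := by
  have h1 : 0 < n := lt_of_lt_of_le hk1 hkn
  have h2 : 0 < (n - 1).choose (k - 1) := Nat.choose_pos (by omega)
  positivity

lemma denom_eq (n k : ℕ) (hk1 : 1 ≤ k) (hkn : k ≤ n) :
    ∫ x in Set.Icc (0:ℝ) 1, x ^ (k - 1) * (1 - x) ^ (n - k)
      = 1 / ((n : ℝ) * ((n - 1).choose (k - 1) : ℝ)) := by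
  have h := integral_scaled n k hk1 hkn 1
  rw [binomSum_one n k hkn] at h
  have hIcc : ∫ x in Set.Icc (0:ℝ) 1, x ^ (k - 1) * (1 - x) ^ (n - k)
      = ∫ x in (0:ℝ)..1, x ^ (k - 1) * (1 - x) ^ (n - k) := by
    rw [intervalIntegral.integral_of_le (by norm_num : (0:ℝ) ≤ 1),
      MeasureTheory.integral_Icc_eq_integral_Ioc]
  rw [hIcc, eq_div_iff (ne_of_gt (coeff_pos n k hk1 hkn))]
  linarith [h]

lemma betaCDF_eq_binomSum (n k : ℕ) (hk1 : 1 ≤ k) (hkn : k ≤ n) (p : ℝ)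
    (hp0 : 0 ≤ p) (hp1 : p ≤ 1) : betaCDF k n p = binomSum n k p := by
  have hset : Set.Icc (0:ℝ) 1 ∩ Set.Iic p = Set.Icc 0 p := by
    ext x
    simp only [Set.mem_inter_iff, Set.mem_Icc, Set.mem_Iic]
    constructor
    · rintro ⟨⟨h0, _⟩, hp⟩; exact ⟨h0, hp⟩
    · rintro ⟨h0, hp'⟩; exact ⟨⟨h0, le_trans hp' hp1⟩, hp'⟩
  have hnum : ∫ x in Set.Icc (0:ℝ) 1 ∩ Set.Iic p, x ^ (k - 1) * (1 - x) ^ (n - k)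
      = ∫ x in (0:ℝ)..p, x ^ (k - 1) * (1 - x) ^ (n - k) := by
    rw [hset, intervalIntegral.integral_of_le hp0,
      MeasureTheory.integral_Icc_eq_integral_Ioc]
  have hc := coeff_pos n k hk1 hkn
  have h := integral_scaled n k hk1 hkn p
  unfold betaCDF
  rw [hnum, denom_eq n k hk1 hkn, ← h]
  field_simp

lemma betaCDF_of_neg (k n : ℕ) {s : ℝ} (hs : s < 0) : betaCDF k n s = 0 := by
  have hempty : Set.Icc (0:ℝ) 1 ∩ Set.Iic s = ∅ := by
    ext x
    simp only [Set.mem_inter_iff, Set.mem_Icc, Set.mem_Iic, Set.mem_empty_iff_false, iff_false,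
      not_and]
    rintro ⟨h0, _⟩ h
    linarith
  unfold betaCDF
  rw [hempty]
  simp

lemma betaCDF_truncate (k n : ℕ) (s : ℝ) : betaCDF k n s = betaCDF k n (min s 1) := by
  have hset : Set.Icc (0:ℝ) 1 ∩ Set.Iic s = Set.Icc (0:ℝ) 1 ∩ Set.Iic (min s 1) := by
    ext x
    simp only [Set.mem_inter_iff, Set.mem_Icc, Set.mem_Iic, le_min_iff]
    tauto
  unfold betaCDF
  rw [hset]

lemma betaCDF_mono (n k : ℕ) (hk1 : 1 ≤ k) (hkn : k ≤ n) {s s' : ℝ} (h : s ≤ s') :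
    betaCDF k n s ≤ betaCDF k n s' := by
  have hD : ∫ x in Set.Icc (0:ℝ) 1, x ^ (k - 1) * (1 - x) ^ (n - k)
      = 1 / ((n : ℝ) * ((n - 1).choose (k - 1) : ℝ)) := denom_eq n k hk1 hkn
  have hDpos : (0:ℝ) < ∫ x in Set.Icc (0:ℝ) 1, x ^ (k - 1) * (1 - x) ^ (n - k) := by
    rw [hD]
    exact div_pos one_pos (coeff_pos n k hk1 hkn)
  unfold betaCDF
  rw [div_le_div_iff_of_pos_right hDpos]
  have hcont : Continuous fun x : ℝ => x ^ (k - 1) * (1 - x) ^ (n - k) := by fun_prop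
  have hInt : IntegrableOn (fun x : ℝ => x ^ (k - 1) * (1 - x) ^ (n - k))
      (Set.Icc (0:ℝ) 1 ∩ Set.Iic s') := by
    exact (hcont.integrableOn_Icc).mono_set Set.inter_subset_left
  refine setIntegral_mono_set hInt ?_ (HasSubset.Subset.eventuallyLE ?_)
  · rw [Filter.EventuallyLE, ae_restrict_iff' ((measurableSet_Icc).inter measurableSet_Iic)]
    refine Filter.Eventually.of_forall fun x hx => ?_
    obtain ⟨⟨h0, h1⟩, _⟩ := hx
    have : (0:ℝ) ≤ 1 - x := by linarith
    positivity
  · exact Set.inter_subset_inter_right _ (Set.Iic_subset_Iic.mpr h)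

open ProbabilityTheory in
lemma prob_count_ge {Ω : Type*} [MeasurableSpace Ω] (P : Measure Ω) [IsProbabilityMeasure P]
    (n k : ℕ) (Z : Fin n → Ω → ℝ) (hmeas : ∀ i, Measurable (Z i))
    (hiid : iIndepFun Z P) (z : ℝ) (pe : ENNReal) (hpe1 : pe ≤ 1)
    (hpe : ∀ i, P {ω | Z i ω ≤ z} = pe) :
    (P {ω | k ≤ (Finset.univ.filter (fun i => Z i ω ≤ z)).card}).toReal
      = binomSum n k pe.toReal := by
  classical
  set A : Fin n → Set Ω := fun i => Z i ⁻¹' Set.Iic z with hA_def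
  have hA : ∀ i, MeasurableSet (A i) := fun i => (hmeas i) measurableSet_Iic
  set B : Finset (Fin n) → Fin n → Set Ω :=
    fun S i => if i ∈ S then A i else (A i)ᶜ with hB_def
  set E : Finset (Fin n) → Set Ω :=
    fun S => {ω | Finset.univ.filter (fun i => Z i ω ≤ z) = S} with hE_def
  have hE_eq : ∀ S, E S = ⋂ i, B S i := by
    intro S
    ext ω
    simp only [hE_def, Set.mem_setOf_eq, Set.mem_iInter, Finset.ext_iff, Finset.mem_filter,
      Finset.mem_univ, true_and]
    constructor
    · intro h i
      by_cases hi : i ∈ S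
      · simp only [hB_def, if_pos hi]
        exact (h i).mpr hi
      · simp only [hB_def, if_neg hi]
        exact fun hc => hi ((h i).mp hc)
    · intro h i
      by_cases hi : i ∈ S
      · have := h i
        simp only [hB_def, if_pos hi] at this
        exact ⟨fun _ => hi, fun _ => this⟩
      · have := h i
        simp only [hB_def, if_neg hi] at this
        exact ⟨fun hc => absurd hc this, fun hc => absurd hc hi⟩
  have hBmeas : ∀ S i, MeasurableSet (B S i) := by
    intro S i
    by_cases hi : i ∈ S
    · rw [hB_def]; simp only [if_pos hi]; exact hA i
    · rw [hB_def]; simp only [if_neg hi]; exact (hA i).compl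
  have hEmeas : ∀ S, MeasurableSet (E S) := by
    intro S
    rw [hE_eq]
    exact MeasurableSet.iInter fun i => hBmeas S i
  have hPA : ∀ i, P (A i) = pe := fun i => hpe i
  have hPAc : ∀ i, P ((A i)ᶜ) = 1 - pe := by
    intro i
    rw [measure_compl (hA i) (measure_ne_top P _), measure_univ, hPA]
  have hPE : ∀ S : Finset (Fin n), P (E S) = pe ^ S.card * (1 - pe) ^ (n - S.card) := by
    intro S
    rw [hE_eq]
    have := hiid.meas_iInter (s := B S) (fun i => ?_)
    · rw [this]
      rw [← Finset.prod_mul_prod_compl S (fun i => P (B S i))]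
      have h1 : ∀ i ∈ S, P (B S i) = pe := fun i hi => by
        rw [hB_def]; simp only [if_pos hi]; exact hPA i
      have h2 : ∀ i ∈ Sᶜ, P (B S i) = 1 - pe := fun i hi => by
        rw [hB_def]; simp only [if_neg (Finset.mem_compl.mp hi)]; exact hPAc i
      rw [Finset.prod_congr rfl h1, Finset.prod_congr rfl h2, Finset.prod_const,
        Finset.prod_const, Finset.card_compl, Fintype.card_fin]
    · by_cases hi : i ∈ S
      · rw [hB_def]; simp only [if_pos hi]
        exact ⟨Set.Iic z, measurableSet_Iic, rfl⟩
      · rw [hB_def]; simp only [if_neg hi]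
        exact MeasurableSet.compl ⟨Set.Iic z, measurableSet_Iic, rfl⟩
  set T : Finset (Finset (Fin n)) := Finset.univ.filter (fun S => k ≤ S.card) with hT_def
  have hunion : {ω | k ≤ (Finset.univ.filter (fun i => Z i ω ≤ z)).card} = ⋃ S ∈ T, E S := by
    ext ω
    simp only [Set.mem_setOf_eq, Set.mem_iUnion, hT_def, Finset.mem_filter, Finset.mem_univ,
      true_and, hE_def]
    constructor
    · intro h
      exact ⟨Finset.univ.filter (fun i => Z i ω ≤ z), h, rfl⟩
    · rintro ⟨S, hS, rfl⟩
      exact hS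
  have hdisj : (↑T : Set (Finset (Fin n))).PairwiseDisjoint E := by
    intro S hS S' hS' hne
    rw [Function.onFun, Set.disjoint_left]
    intro ω h1 h2
    exact hne (h1.symm.trans h2)
  rw [hunion, measure_biUnion_finset hdisj (fun S _ => hEmeas S)]
  have hterm_ne : ∀ S ∈ T, pe ^ S.card * (1 - pe) ^ (n - S.card) ≠ ⊤ := by
    intro S _
    exact ENNReal.mul_ne_top (ENNReal.pow_ne_top (lt_of_le_of_lt hpe1 ENNReal.one_lt_top).ne)
      (ENNReal.pow_ne_top (lt_of_le_of_lt tsub_le_self ENNReal.one_lt_top).ne)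
  rw [Finset.sum_congr rfl (fun S hS => hPE S), ENNReal.toReal_sum (fun S hS => hterm_ne S hS)]
  have htoReal : ∀ S : Finset (Fin n),
      (pe ^ S.card * (1 - pe) ^ (n - S.card)).toReal
        = pe.toReal ^ S.card * (1 - pe.toReal) ^ (n - S.card) := by
    intro S
    rw [ENNReal.toReal_mul, ENNReal.toReal_pow, ENNReal.toReal_pow,
      ENNReal.toReal_sub_of_le hpe1 ENNReal.one_ne_top, ENNReal.toReal_one]
  rw [Finset.sum_congr rfl (fun S _ => htoReal S)]
  -- fiberwise sum over cardinalities
  have hmaps : ∀ S ∈ T, S.card ∈ Finset.Icc k n := by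
    intro S hS
    rw [hT_def, Finset.mem_filter] at hS
    rw [Finset.mem_Icc]
    exact ⟨hS.2, le_trans (Finset.card_le_univ S) (by simp)⟩
  rw [← Finset.sum_fiberwise_of_maps_to hmaps
    (fun S => pe.toReal ^ S.card * (1 - pe.toReal) ^ (n - S.card))]
  unfold binomSum
  refine Finset.sum_congr rfl fun j hj => ?_
  rw [Finset.mem_Icc] at hj
  have hfib : T.filter (fun S => S.card = j) = Finset.powersetCard j Finset.univ := by
    ext S
    simp only [Finset.mem_filter, hT_def, Finset.mem_univ, true_and,
      Finset.mem_powersetCard, Finset.subset_univ]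
    exact ⟨fun h => h.2, fun h => ⟨h ▸ hj.1, h⟩⟩
  rw [hfib]
  rw [Finset.sum_congr rfl (fun S hS => by
    rw [(Finset.mem_powersetCard.mp hS).2]), Finset.sum_const, Finset.card_powersetCard,
    Finset.card_univ, Fintype.card_fin, nsmul_eq_mul]
  ring


end Aux

/-- **The plug-in CDF value at the empirical quantile of i.i.d. finitely supported
samples is stochastically dominated by `Z_Beta + pmax`** where
`Z_Beta ∼ Beta(⌈nq⌉, n - ⌈nq⌉ + 1)` and `pmax` is the largest atom of the common
distribution: for all `t`, `P(F(F̂⁻¹(q)) ≤ t) ≥ P(Z_Beta + pmax ≤ t)`, the right-hand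
side being the Beta CDF evaluated at `t - pmax`. -/

theorem cdf_empQuantile_dominated_by_shifted_beta
    {Ω ι : Type*} [MeasurableSpace Ω] (P : Measure Ω) [IsProbabilityMeasure P]
    [Fintype ι] [Nonempty ι]
    (a : ι → ℝ)
    (n : ℕ) (hn : 1 ≤ n)
    (Z : Fin n → Ω → ℝ) (hmeas : ∀ i, Measurable (Z i))
    (hiid : iIndepFun Z P)
    (hident : ∀ i j, IdentDistrib (Z i) (Z j) P P)
    (hsupp : ∀ i ω, Z i ω ∈ Set.range a)
    (F : ℝ → ℝ) (hF : ∀ z, F z = (P {ω | Z ⟨0, hn⟩ ω ≤ z}).toReal)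
    (pmax : ℝ) (hpmax : pmax = ⨆ i, (P {ω | Z ⟨0, hn⟩ ω = a i}).toReal)
    (q : ℝ) (hq : q ∈ Set.Ioc (0 : ℝ) 1) (t : ℝ) :
    betaCDF ⌈(n : ℝ) * q⌉₊ n (t - pmax) ≤
      (P {ω | F (empQuantile (fun i => Z i ω) q) ≤ t}).toReal := by
  classical
  obtain ⟨hq0, hq1⟩ := hq
  set i0 : Fin n := ⟨0, hn⟩ with hi0_def
  set k := ⌈(n : ℝ) * q⌉₊ with hk_def
  have hnpos : (0:ℝ) < n := by exact_mod_cast hn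
  have hk1 : 1 ≤ k := by
    rw [hk_def]
    rw [Nat.one_le_ceil_iff]
    positivity
  have hkn : k ≤ n := by
    rw [hk_def]
    exact Nat.ceil_le.mpr (by nlinarith)
  have hFmono : Monotone F := by
    intro x y hxy
    rw [hF x, hF y]
    exact ENNReal.toReal_mono (measure_ne_top P _)
      (measure_mono (fun ω h => le_trans h hxy))
  have hF0 : ∀ x, 0 ≤ F x := fun x => by rw [hF]; exact ENNReal.toReal_nonneg
  have hF1 : ∀ x, F x ≤ 1 := fun x => by
    rw [hF]
    simpa using ENNReal.toReal_mono ENNReal.one_ne_top prob_le_one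
  have hpmax_ge : ∀ i, (P {ω | Z i0 ω = a i}).toReal ≤ pmax := by
    rw [hpmax]
    intro i
    exact le_ciSup (f := fun i => (P {ω | Z i0 ω = a i}).toReal)
      (Set.Finite.bddAbove (Set.finite_range _)) i
  rcases lt_or_ge (t - pmax) 0 with hneg | hpos
  · rw [betaCDF_of_neg _ _ hneg]
    exact ENNReal.toReal_nonneg
  have hpm_t : pmax ≤ t := by linarith
  obtain ⟨imin, himin⟩ := Finite.exists_min a
  have hFmin : F (a imin) ≤ pmax := by
    have hsub : {ω | Z i0 ω ≤ a imin} ⊆ {ω | Z i0 ω = a imin} := by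
      intro ω h
      obtain ⟨j, hj⟩ := hsupp i0 ω
      simp only [Set.mem_setOf_eq] at *
      exact le_antisymm h (hj ▸ himin j)
    rw [hF]
    exact le_trans (ENNReal.toReal_mono (measure_ne_top P _) (measure_mono hsub))
      (hpmax_ge imin)
  set TS : Finset ι := Finset.univ.filter (fun i => F (a i) ≤ t) with hTS_def
  have hTSne : TS.Nonempty :=
    ⟨imin, Finset.mem_filter.mpr ⟨Finset.mem_univ _, le_trans hFmin hpm_t⟩⟩
  obtain ⟨istar, histar_mem, histar⟩ := Finset.exists_max_image TS a hTSne
  set z := a istar with hz_def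
  have hFz_t : F z ≤ t := (Finset.mem_filter.mp histar_mem).2
  set p := F z with hp_def
  have hp0 : 0 ≤ p := hF0 z
  have hp1 : p ≤ 1 := hF1 z
  have hkey : min (t - pmax) 1 ≤ p := by
    by_cases hall : ∀ j, F (a j) ≤ t
    · have hzj : ∀ j, a j ≤ z := fun j =>
        histar j (Finset.mem_filter.mpr ⟨Finset.mem_univ _, hall j⟩)
      have hp_eq : p = 1 := by
        have huniv : {ω | Z i0 ω ≤ z} = Set.univ := by
          ext ω
          simp only [Set.mem_setOf_eq, Set.mem_univ, iff_true]
          obtain ⟨j, hj⟩ := hsupp i0 ω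
          exact hj ▸ hzj j
        rw [hp_def, hF, huniv, measure_univ, ENNReal.toReal_one]
      rw [hp_eq]
      exact min_le_right _ _
    · push_neg at hall
      obtain ⟨j0, hj0⟩ := hall
      set US : Finset ι := Finset.univ.filter (fun i => t < F (a i)) with hUS_def
      have hUSne : US.Nonempty := ⟨j0, Finset.mem_filter.mpr ⟨Finset.mem_univ _, hj0⟩⟩
      obtain ⟨jstar, hjs_mem, hjs⟩ := Finset.exists_min_image US a hUSne
      have hjs_t : t < F (a jstar) := (Finset.mem_filter.mp hjs_mem).2
      have hsub : {ω | Z i0 ω ≤ a jstar}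
          ⊆ {ω | Z i0 ω ≤ z} ∪ {ω | Z i0 ω = a jstar} := by
        intro ω h
        simp only [Set.mem_setOf_eq] at h
        obtain ⟨m, hm⟩ := hsupp i0 ω
        by_cases hFm : F (a m) ≤ t
        · left
          have : a m ≤ z := histar m (Finset.mem_filter.mpr ⟨Finset.mem_univ _, hFm⟩)
          exact Set.mem_setOf_eq ▸ (hm ▸ this)
        · right
          have hmem : m ∈ US := Finset.mem_filter.mpr ⟨Finset.mem_univ _, lt_of_not_ge hFm⟩
          have h1 : a jstar ≤ a m := hjs m hmem
          have h2 : a m ≤ a jstar := hm ▸ h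
          exact Set.mem_setOf_eq ▸ (hm ▸ le_antisymm h2 h1)
      have hFjs : F (a jstar) ≤ p + pmax := by
        have h1 : P {ω | Z i0 ω ≤ a jstar}
            ≤ P {ω | Z i0 ω ≤ z} + P {ω | Z i0 ω = a jstar} :=
          le_trans (measure_mono hsub) (measure_union_le _ _)
        have h2 := ENNReal.toReal_mono
          (ENNReal.add_ne_top.mpr ⟨measure_ne_top P _, measure_ne_top P _⟩) h1
        rw [ENNReal.toReal_add (measure_ne_top P _) (measure_ne_top P _)] at h2
        rw [hF (a jstar)]
        calc (P {ω | Z i0 ω ≤ a jstar}).toReal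
            ≤ (P {ω | Z i0 ω ≤ z}).toReal + (P {ω | Z i0 ω = a jstar}).toReal := h2
          _ ≤ p + pmax := add_le_add (le_of_eq (hF z).symm) (hpmax_ge jstar)
      exact le_trans (min_le_left _ _) (by linarith)
  have hstep1 : betaCDF k n (t - pmax) ≤ betaCDF k n p := by
    rw [betaCDF_truncate]
    exact betaCDF_mono n k hk1 hkn hkey
  set pe := P {ω | Z i0 ω ≤ z} with hpe_def
  have hpe1 : pe ≤ 1 := prob_le_one
  have hpe_i : ∀ i, P {ω | Z i ω ≤ z} = pe := by
    intro i
    have := (hident i i0).measure_mem_eq (s := Set.Iic z) measurableSet_Iic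
    exact this
  have hpe_toReal : pe.toReal = p := (hF z).symm
  have hstep2 : betaCDF k n p
      = (P {ω | k ≤ (Finset.univ.filter (fun i => Z i ω ≤ z)).card}).toReal := by
    rw [prob_count_ge P n k Z hmeas hiid z pe hpe1 hpe_i, hpe_toReal]
    exact betaCDF_eq_binomSum n k hk1 hkn p hp0 hp1
  have hincl : {ω | k ≤ (Finset.univ.filter (fun i => Z i ω ≤ z)).card}
      ⊆ {ω | F (empQuantile (fun i => Z i ω) q) ≤ t} := by
    intro ω hω
    simp only [Set.mem_setOf_eq] at hω ⊢
    have hcount : (n:ℝ) * q ≤ ((Finset.univ.filter (fun i => Z i ω ≤ z)).card : ℝ) :=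
      le_trans (Nat.le_ceil _) (by exact_mod_cast hω)
    have hzmem : z ∈ {y : ℝ | q ≤ (Set.ncard {i : Fin n | Z i ω ≤ y} : ℝ) / n} := by
      simp only [Set.mem_setOf_eq]
      have hcard : {i : Fin n | Z i ω ≤ z}.ncard
          = (Finset.univ.filter (fun i => Z i ω ≤ z)).card := by
        rw [← Set.ncard_coe_finset]
        congr 1
        ext i
        simp
      rw [hcard, le_div_iff₀ hnpos]
      nlinarith [hcount]
    have hbdd : BddBelow {y : ℝ | q ≤ (Set.ncard {i : Fin n | Z i ω ≤ y} : ℝ) / n} := by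
      have : Nonempty (Fin n) := ⟨i0⟩
      obtain ⟨istar', hmin⟩ := Finite.exists_min (fun i => Z i ω)
      refine ⟨Z istar' ω, fun y hy => ?_⟩
      simp only [Set.mem_setOf_eq] at hy
      by_contra hcon
      push_neg at hcon
      have hempty : {i : Fin n | Z i ω ≤ y} = ∅ := by
        ext i
        simp only [Set.mem_setOf_eq, Set.mem_empty_iff_false, iff_false, not_le]
        exact lt_of_lt_of_le hcon (hmin i)
      rw [hempty] at hy
      simp only [Set.ncard_empty, Nat.cast_zero, zero_div] at hy
      linarith
    have hquant : empQuantile (fun i => Z i ω) q ≤ z := csInf_le hbdd hzmem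
    exact le_trans (hFmono hquant) hFz_t
  calc betaCDF k n (t - pmax) ≤ betaCDF k n p := hstep1
    _ = (P {ω | k ≤ (Finset.univ.filter (fun i => Z i ω ≤ z)).card}).toReal := hstep2
    _ ≤ (P {ω | F (empQuantile (fun i => Z i ω) q) ≤ t}).toReal :=
      ENNReal.toReal_mono (measure_ne_top P _) (measure_mono hincl)
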